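/- arXiv:1406.7063 — 7 statements merged into one kernel-verified Lean document; each statement's English description precedes it below -/
import Mathlib

section
/- Let K/F be a finite Galois extension with group G, let S be an integral domain with fraction field K, and let f : G × G → S \ {0} be a normalized 2-cocycle (with values in the units of K, i.e. f(σ,τ)f(στ,ρ) = σ(f(τ,ρ))f(σ,τρ) and f(1,σ)=f(σ,1)=1, where G acts on K and preserves S). Then the set H = {σ ∈ G | f(σ,σ⁻¹) is a unit of S} is a subgroup of G. -/
/-- Let `G` act on a field `K` preserving a subring `S`, and let `f : G × G → S \ {0}` be a
normalized 2-cocycle.  Then `H = {σ ∈ G | f(σ,σ⁻¹) is a unit of S}` is a subgroup of `G`. -/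
theorem stmt1 (G K : Type*) [Group G] [Field K] [MulSemiringAction G K]
    (S : Subring K) (hstab : ∀ (g : G) (s : K), s ∈ S → g • s ∈ S)
    (f : G → G → K)
    (hfS : ∀ σ τ : G, f σ τ ∈ S) (hf0 : ∀ σ τ : G, f σ τ ≠ 0)
    (hcoc : ∀ σ τ ρ : G, σ • (f τ ρ) * f σ (τ * ρ) = f σ τ * f (σ * τ) ρ)
    (hnorm : ∀ σ : G, f 1 σ = 1 ∧ f σ 1 = 1) :
    ∃ H : Subgroup G, (H : Set G) = {σ : G | ∃ y ∈ S, f σ σ⁻¹ * y = 1} := by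
  refine ⟨{ carrier := {σ : G | ∃ y ∈ S, f σ σ⁻¹ * y = 1}
            one_mem' := ⟨1, S.one_mem, by simp [(hnorm 1).1]⟩
            mul_mem' := ?_
            inv_mem' := ?_ }, rfl⟩
  · rintro σ τ ⟨a, ha, hfa⟩ ⟨b, hb, hfb⟩
    refine ⟨f σ τ * ((σ * τ) • f τ⁻¹ σ⁻¹) * ((σ • b) * a),
      S.mul_mem (S.mul_mem (hfS σ τ) (hstab _ _ (hfS τ⁻¹ σ⁻¹)))
        (S.mul_mem (hstab _ _ hb) ha), ?_⟩
    have h1 : (σ * τ) • f τ⁻¹ σ⁻¹ * f (σ * τ) ((σ * τ)⁻¹) = f (σ * τ) τ⁻¹ * f σ σ⁻¹ := by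
      have := hcoc (σ * τ) τ⁻¹ σ⁻¹
      rw [mul_inv_rev]
      simpa using this
    have h2 : σ • f τ τ⁻¹ = f σ τ * f (σ * τ) τ⁻¹ := by
      have := hcoc σ τ τ⁻¹
      simpa [(hnorm σ).2] using this
    have hb' : σ • f τ τ⁻¹ * σ • b = 1 := by rw [← smul_mul', hfb, smul_one]
    linear_combination (f σ τ * (σ • b) * a) * h1 - (f σ σ⁻¹ * (σ • b) * a) * h2
      + (f σ σ⁻¹ * a) * hb' + hfa
  · rintro σ ⟨a, ha, hfa⟩
    refine ⟨σ⁻¹ • a, hstab _ _ ha, ?_⟩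
    have hkey : σ • f σ⁻¹ σ = f σ σ⁻¹ := by
      have := hcoc σ σ⁻¹ σ
      simpa [(hnorm σ).2, (hnorm σ).1] using this
    have : σ • (f σ⁻¹ σ * σ⁻¹ • a) = σ • (1 : K) := by
      rw [smul_mul', hkey, smul_inv_smul, smul_one, hfa]
    simpa using (smul_left_cancel σ this)
end

section
/- Let G be a group acting on a field K, S a subring of K stable under the action, and f : G × G → S \ {0} a normalized 2-cocycle. For any σ, τ ∈ G, the identity f^{σ⁻¹}(στ, τ⁻¹σ⁻¹) · f^{σ⁻¹}(σ, τ) · f^{τ}(τ⁻¹, σ⁻¹) = f(σ⁻¹, σ) · f(τ, τ⁻¹) holds, where f^γ(α,β) denotes γ(f(α,β)). -/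
/-- For a normalized 2-cocycle `f : G × G → S \ {0}` (G acting on a field `K` stabilizing a
subring `S`), the identity
`f^{σ⁻¹}(στ, τ⁻¹σ⁻¹) · f^{σ⁻¹}(σ, τ) · f^{τ}(τ⁻¹, σ⁻¹) = f(σ⁻¹, σ) · f(τ, τ⁻¹)` holds. -/
theorem stmt2 (G K : Type*) [Group G] [Field K] [MulSemiringAction G K]
    (S : Subring K) (hstab : ∀ (g : G) (s : K), s ∈ S → g • s ∈ S)
    (f : G → G → K)
    (hfS : ∀ σ τ : G, f σ τ ∈ S) (hf0 : ∀ σ τ : G, f σ τ ≠ 0)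
    (hcoc : ∀ σ τ ρ : G, σ • (f τ ρ) * f σ (τ * ρ) = f σ τ * f (σ * τ) ρ)
    (hnorm : ∀ σ : G, f 1 σ = 1 ∧ f σ 1 = 1)
    (σ τ : G) :
    σ⁻¹ • (f (σ * τ) (τ⁻¹ * σ⁻¹)) * (σ⁻¹ • (f σ τ)) * (τ • (f τ⁻¹ σ⁻¹)) =
      f σ⁻¹ σ * f τ τ⁻¹ := by
  have h1 := hcoc σ⁻¹ (σ * τ) (τ⁻¹ * σ⁻¹)
  have h2 := hcoc σ⁻¹ σ τ
  have h3 := hcoc τ τ⁻¹ σ⁻¹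
  have e1 : (σ * τ) * (τ⁻¹ * σ⁻¹) = 1 := by group
  have e2 : σ⁻¹ * (σ * τ) = τ := by group
  have e3 : σ⁻¹ * σ = (1 : G) := by group
  have e4 : τ * τ⁻¹ = (1 : G) := by group
  rw [e1, e2, (hnorm _).2, mul_one] at h1
  rw [e3, (hnorm _).1, mul_one] at h2
  rw [e4, (hnorm _).1, mul_one] at h3
  rw [h1]
  calc f σ⁻¹ (σ * τ) * f τ (τ⁻¹ * σ⁻¹) * σ⁻¹ • f σ τ * τ • f τ⁻¹ σ⁻¹
      = (σ⁻¹ • f σ τ * f σ⁻¹ (σ * τ)) * (τ • f τ⁻¹ σ⁻¹ * f τ (τ⁻¹ * σ⁻¹)) := by ring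
    _ = f σ⁻¹ σ * f τ τ⁻¹ := by rw [h2, h3]
end

section
/- Let V ⊆ W be valuation rings of a field F, let K/F be a finite Galois extension, let S be the integral closure of V in K, and let R = W·S (the subring of K generated by W and S). Then R is the integral closure of W in K. -/
open Polynomial

/-- If `z : K` is a root of a monic polynomial over `F` all of whose coefficients lie in a
subring `T` of `F`, then `z` is in the integral closure of `T` in `K`. -/
lemma mem_integralClosure_of_coeff_mem {F K : Type*} [Field F] [Field K] [Algebra F K]
    (T : Subring F) (p : F[X]) (hm : p.Monic) (hc : ∀ i, p.coeff i ∈ T) {z : K}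
    (hz : Polynomial.eval₂ (algebraMap F K) z p = 0) : z ∈ integralClosure T K := by
  have hsub : (↑p.coeffs : Set F) ⊆ T := by
    intro a ha
    obtain ⟨n, -, rfl⟩ := Polynomial.mem_coeffs_iff.mp (Finset.mem_coe.mp ha)
    exact hc n
  refine ⟨p.toSubring T hsub, (Polynomial.monic_toSubring p T hsub).mpr hm, ?_⟩
  have hcomp : algebraMap (↥T) K = (algebraMap F K).comp T.subtype := by
    ext a
    exact IsScalarTower.algebraMap_apply (↥T) F K a
  rw [hcomp, ← Polynomial.eval₂_map, Polynomial.map_toSubring]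
  exact hz

/-- Let `V ⊆ W` be valuation rings of a field `F`, let `K/F` be a finite Galois extension,
let `S` be the integral closure of `V` in `K`, and let `R = W·S` be the subring of `K`
generated by (the image of) `W` together with `S`.  Then `R` is the integral closure of `W`
in `K`. -/
theorem stmt4 (F K : Type*) [Field F] [Field K] [Algebra F K]
    [FiniteDimensional F K] [IsGalois F K]
    (V W : Subring F)
    (hV : ∀ x : F, x ∈ V ∨ x⁻¹ ∈ V) (hW : ∀ x : F, x ∈ W ∨ x⁻¹ ∈ W)
    (hVW : V ≤ W) :
    Subring.closure ((W.map (algebraMap F K) : Set K) ∪ ((integralClosure V K).toSubring : Set K))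
      = (integralClosure W K).toSubring := by
  apply le_antisymm
  · -- easy direction: W·S ⊆ integral closure of W
    rw [Subring.closure_le]
    rintro z (hz | hz)
    · -- images of W are integral over W
      obtain ⟨w, hw, rfl⟩ := hz
      have : algebraMap F K w = algebraMap (↥W) K ⟨w, hw⟩ :=
        (IsScalarTower.algebraMap_apply (↥W) F K ⟨w, hw⟩).symm
      rw [this]
      exact (integralClosure W K).algebraMap_mem _
    · -- S is integral over V, hence over W
      obtain ⟨p, hpm, hpz⟩ := hz
      have hcomp : algebraMap (↥V) K = (algebraMap F K).comp V.subtype := by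
        ext a; exact IsScalarTower.algebraMap_apply (↥V) F K a
      refine mem_integralClosure_of_coeff_mem W (p.map V.subtype) (hpm.map _)
        (fun i => ?_) ?_
      · rw [Polynomial.coeff_map]
        exact hVW (p.coeff i).2
      · rw [Polynomial.eval₂_map, ← hcomp]
        exact hpz
  · -- hard direction
    intro z hz
    obtain ⟨p₀, hp₀m, hp₀z⟩ := hz
    set p : F[X] := p₀.map W.subtype with hp
    have hpm : p.Monic := hp₀m.map _
    have hpz : Polynomial.eval₂ (algebraMap F K) z p = 0 := by
      have hcomp : algebraMap (↥W) K = (algebraMap F K).comp W.subtype := by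
        ext a; exact IsScalarTower.algebraMap_apply (↥W) F K a
      rw [hp, Polynomial.eval₂_map, ← hcomp]
      exact hp₀z
    have hpc : ∀ i, p.coeff i ∈ W := by
      intro i
      rw [hp, Polynomial.coeff_map]
      exact (p₀.coeff i).2
    -- the scaling factor d
    classical
    set n := p.natDegree with hn
    set d : F := ∏ i ∈ Finset.range n, (if p.coeff i ∈ V then 1 else (p.coeff i)⁻¹) with hd
    have hdV : d ∈ V := by
      apply Subring.prod_mem
      intro i _
      split_ifs with h
      · exact V.one_mem
      · rcases hV (p.coeff i) with h' | h'
        · exact absurd h' h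
        · exact h'
    have hdne : d ≠ 0 := by
      rw [hd]
      apply Finset.prod_ne_zero_iff.mpr
      intro i _
      split_ifs with h
      · exact one_ne_zero
      · intro h0
        have : p.coeff i = 0 := by
          by_contra hne
          exact hne (by rw [← inv_inv (p.coeff i), h0, inv_zero])
        exact h (this ▸ V.zero_mem)
    have hdinvW : d⁻¹ ∈ W := by
      rw [hd, ← Finset.prod_inv_distrib]
      apply Subring.prod_mem
      intro i _
      split_ifs with h
      · simpa using W.one_mem
      · rw [inv_inv]
        exact hpc i
    -- d * coeff ∈ V for each coefficient
    have hdc : ∀ i, i ∈ Finset.range n → d * p.coeff i ∈ V := by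
      intro i hi
      rw [hd, ← Finset.prod_erase_mul _ _ hi]
      have hrest : (∏ j ∈ (Finset.range n).erase i,
          (if p.coeff j ∈ V then 1 else (p.coeff j)⁻¹)) ∈ V := by
        apply Subring.prod_mem
        intro j _
        split_ifs with h
        · exact V.one_mem
        · rcases hV (p.coeff j) with h' | h'
          · exact absurd h' h
          · exact h'
      split_ifs with h
      · rw [mul_one]
        exact V.mul_mem hrest h
      · have hne : p.coeff i ≠ 0 := fun h0 => h (h0 ▸ V.zero_mem)
        rw [mul_assoc, inv_mul_cancel₀ hne, mul_one]
        exact hrest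
    -- the scaled polynomial has coefficients in V
    set q : F[X] := p.scaleRoots d with hq
    have hqm : q.Monic := (Polynomial.monic_scaleRoots_iff d).mpr hpm
    have hqc : ∀ i, q.coeff i ∈ V := by
      intro i
      rw [hq, Polynomial.coeff_scaleRoots]
      rcases lt_or_ge i n with hi | hi
      · obtain ⟨k, hk⟩ : ∃ k, n - i = k + 1 := ⟨n - i - 1, by omega⟩
        have heq : p.coeff i * d ^ (n - i) = d * p.coeff i * d ^ k := by
          rw [hk]; ring
        rw [heq]
        exact V.mul_mem (hdc i (Finset.mem_range.mpr hi)) (V.pow_mem hdV k)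
      · rcases eq_or_lt_of_le hi with rfl | hi'
        · rw [Nat.sub_self, pow_zero, mul_one, hn, hpm.coeff_natDegree]
          exact V.one_mem
        · rw [Polynomial.coeff_eq_zero_of_natDegree_lt (by omega : p.natDegree < i), zero_mul]
          exact V.zero_mem
    -- (d : K) * z is integral over V
    have hroot : Polynomial.eval₂ (algebraMap F K) (algebraMap F K d * z) q = 0 :=
      Polynomial.scaleRoots_eval₂_eq_zero _ hpz
    have hS : algebraMap F K d * z ∈ integralClosure V K :=
      mem_integralClosure_of_coeff_mem V q hqm hqc hroot
    -- conclude
    have hWmem : algebraMap F K d⁻¹ ∈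
        Subring.closure ((W.map (algebraMap F K) : Set K)
          ∪ ((integralClosure V K).toSubring : Set K)) :=
      Subring.subset_closure (Or.inl ⟨d⁻¹, hdinvW, rfl⟩)
    have hSmem : algebraMap F K d * z ∈
        Subring.closure ((W.map (algebraMap F K) : Set K)
          ∪ ((integralClosure V K).toSubring : Set K)) :=
      Subring.subset_closure (Or.inr hS)
    have : z = algebraMap F K d⁻¹ * (algebraMap F K d * z) := by
      rw [← mul_assoc, ← map_mul, inv_mul_cancel₀ hdne, map_one, one_mul]
    rw [this]
    exact Subring.mul_mem _ hWmem hSmem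
end

section
/- Let V₁ ⊆ W₁ be valuation rings of a field K with V₁ ≠ W₁. If t ∈ V₁ and t ∉ J(V₁)², then t is a unit of W₁. -/
lemma aux_isUnit_iff {K : Type*} [Field K] (A : ValuationSubring K) (x : K) (hx : x ∈ A) :
    IsUnit (⟨x, hx⟩ : A) ↔ x ≠ 0 ∧ x⁻¹ ∈ A := by
  constructor
  · rintro ⟨u, hu⟩
    have h1 : (u : A) * (↑u⁻¹ : A) = 1 := u.mul_inv
    have hK : x * ((↑u⁻¹ : A) : K) = 1 := by
      have := congrArg (Subtype.val) h1
      rwa [hu] at this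
    have hx0 : x ≠ 0 := by
      intro h0; rw [h0, zero_mul] at hK; exact one_ne_zero hK.symm
    refine ⟨hx0, ?_⟩
    have : x⁻¹ = ((↑u⁻¹ : A) : K) := inv_eq_of_mul_eq_one_right hK
    rw [this]; exact (↑u⁻¹ : A).2
  · rintro ⟨hx0, hinv⟩
    exact IsUnit.of_mul_eq_one (a := _) (⟨x⁻¹, hinv⟩ : A)
      (Subtype.ext (mul_inv_cancel₀ hx0))

/-- Let `V₁ ⊊ W₁` be valuation rings of a field `K`.  If `t ∈ V₁` and `t ∉ J(V₁)²`, then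
`t` is a unit of `W₁`. -/
theorem stmt6 (K : Type*) [Field K] (V₁ W₁ : ValuationSubring K)
    (h : V₁ ≤ W₁) (hne : V₁ ≠ W₁) (t : K) (ht : t ∈ V₁)
    (h2 : (⟨t, ht⟩ : V₁) ∉ (IsLocalRing.maximalIdeal V₁) ^ 2) :
    IsUnit (⟨t, h ht⟩ : W₁) := by
  -- t ≠ 0
  have ht0 : t ≠ 0 := by
    intro h0
    apply h2
    subst h0
    have : (⟨(0:K), ht⟩ : V₁) = 0 := rfl
    rw [this]
    exact Ideal.zero_mem _
  -- pick w ∈ W₁ \ V₁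
  obtain ⟨w, hwW, hwV⟩ : ∃ w, w ∈ W₁ ∧ w ∉ V₁ := by
    by_contra hc
    push_neg at hc
    exact hne (le_antisymm h fun x hx => hc x hx)
  have hw0 : w ≠ 0 := by rintro rfl; exact hwV V₁.zero_mem
  have hwinv : w⁻¹ ∈ V₁ := (V₁.mem_or_inv_mem w).resolve_left hwV
  -- w⁻¹ is in the maximal ideal of V₁
  have hwinv_mem : (⟨w⁻¹, hwinv⟩ : V₁) ∈ IsLocalRing.maximalIdeal V₁ := by
    rw [IsLocalRing.mem_maximalIdeal, mem_nonunits_iff]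
    intro hu
    rw [aux_isUnit_iff] at hu
    rw [inv_inv] at hu
    exact hwV hu.2
  by_contra htW
  -- t is in the maximal ideal of W₁, hence so is t*w
  have htm : (⟨t, h ht⟩ : W₁) ∈ IsLocalRing.maximalIdeal W₁ := by
    rw [IsLocalRing.mem_maximalIdeal, mem_nonunits_iff]; exact htW
  have htwW : t * w ∈ W₁ := W₁.mul_mem _ _ (h ht) hwW
  have htwm : (⟨t * w, htwW⟩ : W₁) ∈ IsLocalRing.maximalIdeal W₁ := by
    have : (⟨t * w, htwW⟩ : W₁) = (⟨w, hwW⟩ : W₁) * ⟨t, h ht⟩ := by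
      ext; simp [mul_comm]
    rw [this]
    exact Ideal.mul_mem_left _ _ htm
  -- (t*w)⁻¹ ∉ W₁
  have htw0 : t * w ≠ 0 := mul_ne_zero ht0 hw0
  have htwinv : (t * w)⁻¹ ∉ W₁ := by
    intro hm
    have : IsUnit (⟨t * w, htwW⟩ : W₁) := (aux_isUnit_iff W₁ _ _).2 ⟨htw0, hm⟩
    exact (IsLocalRing.mem_maximalIdeal _).1 htwm this
  -- so t*w ∈ V₁ and it is a nonunit of V₁
  have htwV : t * w ∈ V₁ := (V₁.mem_or_inv_mem (t * w)).resolve_right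
    (fun hc => htwinv (h hc))
  have htwVm : (⟨t * w, htwV⟩ : V₁) ∈ IsLocalRing.maximalIdeal V₁ := by
    rw [IsLocalRing.mem_maximalIdeal, mem_nonunits_iff]
    intro hu
    rw [aux_isUnit_iff] at hu
    exact htwinv (h hu.2)
  -- t = (t*w) * w⁻¹ ∈ J(V₁)²
  apply h2
  have heq : (⟨t, ht⟩ : V₁) = (⟨t * w, htwV⟩ : V₁) * ⟨w⁻¹, hwinv⟩ := by
    ext
    simp [mul_assoc, mul_inv_cancel₀ hw0]
  rw [heq, pow_two]
  exact Ideal.mul_mem_mul htwVm hwinv_mem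
end

section
/- Let V be a valuation ring of a field F whose maximal ideal J(V) satisfies J(V)² = J(V) (i.e., J(V) is non-principal), let V₁ be a valuation ring of a finite extension K of F lying over V (V₁ ∩ F = V). Then J(V₁)² = J(V₁). -/
/-- In a vanishing sum with a term of nonzero valuation, two distinct terms have the
same (nonzero) valuation. -/
theorem aux_exists_two_eq_val {K Γ₀ : Type*} [Field K] [LinearOrderedCommGroupWithZero Γ₀]
    (v : Valuation K Γ₀) {ι : Type*} {s : Finset ι} {f : ι → K}
    (hs : ∑ i ∈ s, f i = 0) {j₀ : ι} (hj₀ : j₀ ∈ s) (hj₀0 : v (f j₀) ≠ 0) :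
    ∃ i ∈ s, ∃ k ∈ s, i ≠ k ∧ v (f i) = v (f k) ∧ v (f i) ≠ 0 := by
  classical
  obtain ⟨j, hj, hmax⟩ := s.exists_max_image (fun i => v (f i)) ⟨j₀, hj₀⟩
  have hj0 : v (f j) ≠ 0 := by
    intro h
    exact hj₀0 (le_antisymm (h ▸ hmax j₀ hj₀) zero_le')
  by_cases hlt : ∀ i ∈ s \ {j}, v (f i) < v (f j)
  · exfalso
    have := v.map_sum_eq_of_lt hj hlt
    rw [hs, v.map_zero] at this
    exact hj0 this.symm
  · push_neg at hlt
    obtain ⟨i, hi, hnlt⟩ := hlt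
    rw [Finset.mem_sdiff, Finset.mem_singleton] at hi
    refine ⟨i, hi.1, j, hj, hi.2, le_antisymm (hmax i hi.1) hnlt, ?_⟩
    rw [le_antisymm (hmax i hi.1) hnlt]
    exact hj0

/-- For `x ≠ 0` in a finite extension, some positive power of `v x` is the valuation
of an element of the base field. -/
theorem aux_exists_pow_val_eq {F K Γ₀ : Type*} [Field F] [Field K] [Algebra F K]
    [FiniteDimensional F K] [LinearOrderedCommGroupWithZero Γ₀] (v : Valuation K Γ₀)
    {x : K} (hx : x ≠ 0) :
    ∃ (m : ℕ) (c : F), 0 < m ∧ c ≠ 0 ∧ v (algebraMap F K c) = (v x) ^ m := by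
  have hint : IsIntegral F x := Algebra.IsIntegral.isIntegral x
  set p := minpoly F x with hp
  have hp0 : p ≠ 0 := minpoly.ne_zero hint
  have hsum : ∑ i ∈ p.support, algebraMap F K (p.coeff i) * x ^ i = 0 := by
    have h := minpoly.aeval F x
    rwa [Polynomial.aeval_def, Polynomial.eval₂_eq_sum, Polynomial.sum_def] at h
  have hterm : ∀ i ∈ p.support, v (algebraMap F K (p.coeff i) * x ^ i) ≠ 0 := by
    intro i hi
    rw [Valuation.ne_zero_iff]
    apply mul_ne_zero
    · exact (map_ne_zero (algebraMap F K)).mpr (Polynomial.mem_support_iff.mp hi)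
    · exact pow_ne_zero _ hx
  obtain ⟨j₀, hj₀⟩ := Polynomial.support_nonempty.mpr hp0
  obtain ⟨i, hi, k, hk, hik, heq, hne⟩ :=
    aux_exists_two_eq_val v hsum hj₀ (hterm j₀ hj₀)
  have hvx : v x ≠ 0 := (Valuation.ne_zero_iff v).mpr hx
  have hci : v (algebraMap F K (p.coeff i)) ≠ 0 :=
    (Valuation.ne_zero_iff v).mpr ((map_ne_zero (algebraMap F K)).mpr
      (Polynomial.mem_support_iff.mp hi))
  have hck : v (algebraMap F K (p.coeff k)) ≠ 0 :=
    (Valuation.ne_zero_iff v).mpr ((map_ne_zero (algebraMap F K)).mpr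
      (Polynomial.mem_support_iff.mp hk))
  rw [v.map_mul, v.map_mul, v.map_pow, v.map_pow] at heq
  -- WLOG handling by cases on the order of i, k
  rcases hik.lt_or_gt with h | h
  · refine ⟨k - i, p.coeff i / p.coeff k, Nat.sub_pos_of_lt h, ?_, ?_⟩
    · exact div_ne_zero (Polynomial.mem_support_iff.mp hi) (Polynomial.mem_support_iff.mp hk)
    · rw [map_div₀, map_div₀, pow_sub₀ _ hvx h.le, ← div_eq_mul_inv,
        div_eq_div_iff hck (pow_ne_zero _ hvx), heq]
      exact mul_comm _ _
  · refine ⟨i - k, p.coeff k / p.coeff i, Nat.sub_pos_of_lt h, ?_, ?_⟩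
    · exact div_ne_zero (Polynomial.mem_support_iff.mp hk) (Polynomial.mem_support_iff.mp hi)
    · rw [map_div₀, map_div₀, pow_sub₀ _ hvx h.le, ← div_eq_mul_inv,
        div_eq_div_iff hci (pow_ne_zero _ hvx), ← heq]
      exact mul_comm _ _

/-- If the maximal ideal of a valuation subring is idempotent, then any element of it
is divisible by an arbitrarily high `2`-power of some element of the maximal ideal. -/
theorem aux_exists_pow_dvd {F : Type*} [Field F] (V : ValuationSubring F)
    (hJ : (IsLocalRing.maximalIdeal V) ^ 2 = IsLocalRing.maximalIdeal V) (n : ℕ) :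
    ∀ c : V, c ∈ IsLocalRing.maximalIdeal V →
      ∃ a : V, a ∈ IsLocalRing.maximalIdeal V ∧ a ^ (2 ^ n) ∣ c := by
  induction n with
  | zero => exact fun c hc => ⟨c, hc, by simpa using dvd_refl c⟩
  | succ n ih =>
    intro c hc
    obtain ⟨a, ha, hdvd⟩ := ih c hc
    -- find b ∈ J with b^2 ∣ a
    have ha2 : a ∈ (IsLocalRing.maximalIdeal V) ^ 2 := by rw [hJ]; exact ha
    rw [sq] at ha2
    have key : ∃ b : V, b ∈ IsLocalRing.maximalIdeal V ∧ b * b ∣ a := by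
      refine Submodule.mul_induction_on ha2 ?_ ?_
      · intro p hp q hq
        rcases ValuationRing.dvd_total p q with h | h
        · exact ⟨p, hp, mul_dvd_mul_left p h⟩
        · exact ⟨q, hq, mul_dvd_mul_right h q⟩
      · rintro z₁ z₂ ⟨b₁, hb₁, hd₁⟩ ⟨b₂, hb₂, hd₂⟩
        rcases ValuationRing.dvd_total b₁ b₂ with h | h
        · exact ⟨b₁, hb₁, dvd_add (hd₁) ((mul_dvd_mul h h).trans hd₂)⟩
        · exact ⟨b₂, hb₂, dvd_add ((mul_dvd_mul h h).trans hd₁) hd₂⟩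
    obtain ⟨b, hb, hbd⟩ := key
    refine ⟨b, hb, ?_⟩
    have : b ^ (2 ^ (n + 1)) = (b * b) ^ (2 ^ n) := by
      rw [← sq, ← pow_mul, pow_succ, Nat.mul_comm]
    rw [this]
    exact (pow_dvd_pow_of_dvd hbd _).trans hdvd

/-- If `algebraMap F K c` has valuation `< 1` then `c` lies in the maximal ideal of `V`. -/
theorem aux_mem_J {F K : Type*} [Field F] [Field K] [Algebra F K]
    (V : ValuationSubring F) (V₁ : ValuationSubring K)
    (hover : V₁.comap (algebraMap F K) = V) {c : F}
    (h : V₁.valuation (algebraMap F K c) < 1) :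
    ∃ hc : c ∈ V, (⟨c, hc⟩ : V) ∈ IsLocalRing.maximalIdeal V := by
  have hcV : c ∈ V := by
    rw [← hover, ValuationSubring.mem_comap]
    exact V₁.mem_of_valuation_le_one _ h.le
  refine ⟨hcV, ?_⟩
  rw [IsLocalRing.mem_maximalIdeal, mem_nonunits_iff]
  intro hu
  obtain ⟨d, hd⟩ := isUnit_iff_exists_inv.mp hu
  have hd' : (c : F) * (d : F) = 1 := by
    have := congrArg (Subtype.val) hd; simpa using this
  have : algebraMap F K c * algebraMap F K (d : F) = 1 := by
    rw [← map_mul, hd', map_one]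
  have hdV₁ : (algebraMap F K (d : F)) ∈ V₁ := by
    rw [← ValuationSubring.mem_comap (f := algebraMap F K), hover]; exact d.2
  have h1 : (1 : V₁.ValueGroup) ≤ V₁.valuation (algebraMap F K c) := by
    have := congrArg V₁.valuation this
    rw [V₁.valuation.map_mul, V₁.valuation.map_one] at this
    calc (1 : V₁.ValueGroup) = V₁.valuation (algebraMap F K c)
          * V₁.valuation (algebraMap F K (d : F)) := this.symm
      _ ≤ V₁.valuation (algebraMap F K c) * 1 :=
          mul_le_mul_right ((V₁.valuation_le_one_iff _).mpr hdV₁) _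
      _ = V₁.valuation (algebraMap F K c) := mul_one _
  exact absurd h1 (not_le.mpr h)

/-- Conversely, elements of the maximal ideal of `V` have valuation `< 1` in `V₁`. -/
theorem aux_val_lt_one {F K : Type*} [Field F] [Field K] [Algebra F K]
    (V : ValuationSubring F) (V₁ : ValuationSubring K)
    (hover : V₁.comap (algebraMap F K) = V) {a : V}
    (ha : a ∈ IsLocalRing.maximalIdeal V) :
    V₁.valuation (algebraMap F K (a : F)) < 1 := by
  have haV₁ : algebraMap F K (a : F) ∈ V₁ := by
    have h2 : (a : F) ∈ V₁.comap (algebraMap F K) := by rw [hover]; exact a.2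
    exact ValuationSubring.mem_comap.mp h2
  have hle : V₁.valuation (algebraMap F K (a : F)) ≤ 1 :=
    (V₁.valuation_le_one_iff _).mpr haV₁
  rcases lt_or_eq_of_le hle with h | h
  · exact h
  · exfalso
    have ha0 : (a : F) ≠ 0 := by
      intro h0
      rw [h0, map_zero, V₁.valuation.map_zero] at h
      exact zero_ne_one h
    have hinv : algebraMap F K (a : F)⁻¹ ∈ V₁ := by
      apply V₁.mem_of_valuation_le_one
      rw [map_inv₀, map_inv₀, h, inv_one]
    have hinvV : (a : F)⁻¹ ∈ V := by
      have h2 : (a : F)⁻¹ ∈ V₁.comap (algebraMap F K) := ValuationSubring.mem_comap.mpr hinv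
      rwa [hover] at h2
    have : IsUnit a := by
      apply isUnit_iff_exists_inv.mpr
      exact ⟨⟨(a : F)⁻¹, hinvV⟩, Subtype.ext (by simp [mul_inv_cancel₀ ha0])⟩
    exact (IsLocalRing.mem_maximalIdeal a).mp ha this

/-- Let `V` be a valuation ring of `F` whose maximal ideal satisfies `J(V)² = J(V)`
(i.e. `J(V)` is non-principal), let `K/F` be a finite extension and `V₁` a valuation ring
of `K` lying over `V`.  Then `J(V₁)² = J(V₁)`. -/
theorem stmt7 (F K : Type*) [Field F] [Field K] [Algebra F K] [FiniteDimensional F K]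
    (V : ValuationSubring F) (V₁ : ValuationSubring K)
    (hover : V₁.comap (algebraMap F K) = V)
    (hJ : (IsLocalRing.maximalIdeal V) ^ 2 = IsLocalRing.maximalIdeal V) :
    (IsLocalRing.maximalIdeal V₁) ^ 2 = IsLocalRing.maximalIdeal V₁ := by
  refine le_antisymm (Ideal.pow_le_self two_ne_zero) ?_
  intro x hx
  by_cases hx0 : x = 0
  · rw [hx0]; exact zero_mem _
  have hxK : (x : K) ≠ 0 := fun h => hx0 (Subtype.ext h)
  set v := V₁.valuation with hv
  have hvx : v (x : K) < 1 := (V₁.valuation_lt_one_iff x).mp hx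
  have hvx0 : v (x : K) ≠ 0 := (Valuation.ne_zero_iff v).mpr hxK
  obtain ⟨m, c, hm, hc0, hcv⟩ := aux_exists_pow_val_eq (F := F) v hxK
  have hcv1 : v (algebraMap F K c) < 1 := by
    rw [hcv]
    exact (pow_lt_one_iff_of_nonneg zero_le' hm.ne').mpr hvx
  obtain ⟨hcV, hcJ⟩ := aux_mem_J V V₁ hover hcv1
  obtain ⟨a, haJ, hdvd⟩ := aux_exists_pow_dvd V hJ (2 * m) ⟨c, hcV⟩ hcJ
  obtain ⟨t, ht⟩ := hdvd
  -- push the divisibility to K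
  have htF : c = (a : F) ^ (2 ^ (2 * m)) * (t : F) := by
    have h2 := congrArg Subtype.val ht
    push_cast at h2
    exact h2
  have htV₁ : algebraMap F K (t : F) ∈ V₁ := by
    have h2 : (t : F) ∈ V₁.comap (algebraMap F K) := by rw [hover]; exact t.2
    exact ValuationSubring.mem_comap.mp h2
  have hKeq : algebraMap F K c
      = (algebraMap F K (a : F)) ^ (2 ^ (2 * m)) * algebraMap F K (t : F) := by
    rw [htF, map_mul, map_pow]
  set g := v (algebraMap F K (a : F)) with hg
  have hg1 : g < 1 := aux_val_lt_one V V₁ hover haJ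
  have hvc : v (algebraMap F K c) ≤ g ^ (2 ^ (2 * m)) := by
    rw [hKeq, v.map_mul, v.map_pow]
    calc g ^ 2 ^ (2 * m) * v (algebraMap F K (t : F))
        ≤ g ^ 2 ^ (2 * m) * 1 :=
          mul_le_mul_right ((V₁.valuation_le_one_iff _).mpr htV₁) _
      _ = g ^ 2 ^ (2 * m) := mul_one _
  have hg0 : g ≠ 0 := by
    intro h0
    rw [h0, zero_pow (by positivity)] at hvc
    have : v (algebraMap F K c) = 0 := le_antisymm hvc zero_le'
    exact ((Valuation.ne_zero_iff v).mpr ((map_ne_zero (algebraMap F K)).mpr hc0)) this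
  -- (v x)^m ≤ (g^2)^m
  have hchain : (v (x : K)) ^ m ≤ (g ^ 2) ^ m := by
    rw [← hcv, ← pow_mul]
    refine hvc.trans ?_
    exact pow_le_pow_right_of_le_one' hg1.le (Nat.lt_two_pow_self (n := 2 * m)).le
  have hfin : v (x : K) ≤ g ^ 2 := le_of_pow_le_pow_left₀ hm.ne' zero_le' hchain
  -- write x as a product of two elements of the maximal ideal
  have haK : algebraMap F K (a : F) ≠ 0 := by
    rw [map_ne_zero]
    intro h0
    apply hg0
    rw [hg, h0, map_zero, v.map_zero]
  have haV₁ : algebraMap F K (a : F) ∈ V₁ := by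
    have h2 : (a : F) ∈ V₁.comap (algebraMap F K) := by rw [hover]; exact a.2
    exact ValuationSubring.mem_comap.mp h2
  set b : K := (x : K) / algebraMap F K (a : F) with hb
  have hvb : v b < 1 := by
    rw [hb, map_div₀]
    have h1 : v (x : K) / g ≤ g := by
      rw [div_le_iff₀ (zero_lt_iff.mpr hg0)]
      rwa [← sq]
    exact lt_of_le_of_lt h1 hg1
  have hbV₁ : b ∈ V₁ := V₁.mem_of_valuation_le_one _ hvb.le
  have hxeq : x = (⟨algebraMap F K (a : F), haV₁⟩ : V₁) * ⟨b, hbV₁⟩ := by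
    apply Subtype.ext
    show (x : K) = algebraMap F K (a : F) * b
    rw [hb, mul_comm, div_mul_cancel₀ _ haK]
  rw [hxeq, sq]
  apply Ideal.mul_mem_mul
  · exact (V₁.valuation_lt_one_iff _).mpr hg1
  · exact (V₁.valuation_lt_one_iff _).mpr hvb
end

section
/- Let V be a valuation ring of a field F, K/F a finite Galois extension in which V is unramified and defectless, S the integral closure of V in K, V₁ a valuation ring of K lying over V, and M = J(V₁) ∩ S. Then M² = J(V₁)² ∩ S. -/
open Polynomial

section Aux
variable {F K : Type*} [Field F] [Field K] [Algebra F K]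

lemma mem_vs_of_isIntegral {A : ValuationSubring K} {x : K} (h : IsIntegral A x) : x ∈ A := by
  have := (Valuation.Integers.mem_of_integral (O := A) (v := A.valuation)
    { hom_inj := Subtype.coe_injective
      map_le_one := fun r => A.valuation_le_one r
      exists_of_le_one := fun r hr => ⟨⟨r, A.mem_of_valuation_le_one r hr⟩, rfl⟩ } h)
  rwa [Valuation.mem_integer_iff, A.valuation_le_one_iff] at this

/-- Integral elements over `V` lie in every valuation subring containing the image of `V`. -/
lemma integral_mem_vs (V : Subring F) (W : ValuationSubring K)
    (hW : ∀ v : F, v ∈ V → algebraMap F K v ∈ W) {x : K} (hx : IsIntegral V x) : x ∈ W := by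
  obtain ⟨p, hpm, hp0⟩ := hx
  have hg : ∀ v : V, algebraMap F K (v : F) ∈ W := fun v => hW v v.2
  let g : (V : Subring F) →+* W := {
    toFun := fun v => ⟨algebraMap F K (v : F), hg v⟩
    map_one' := by ext; simp
    map_mul' := fun a b => by ext; simp
    map_zero' := by ext; simp
    map_add' := fun a b => by ext; simp }
  refine mem_vs_of_isIntegral (A := W) ⟨p.map g, hpm.map g, ?_⟩
  rw [Polynomial.eval₂_map]
  have : (algebraMap W K).comp g = algebraMap V K := RingHom.ext fun v => rfl
  rw [this]
  exact hp0

/-- Krull: an element lying in every valuation subring containing the image of `V`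
is integral over `V`. -/
lemma isIntegral_of_mem_all (V : Subring F) {y : K}
    (h : ∀ W : ValuationSubring K, (∀ v : F, v ∈ V → algebraMap F K v ∈ W) → y ∈ W) :
    IsIntegral (V : Subring F) y := by
  by_cases hy0 : y = 0
  · exact hy0 ▸ isIntegral_zero
  -- pass to the image subring of K
  set R₀ : Subring K := V.map (algebraMap F K) with hR₀
  have hinj : Function.Injective (algebraMap F K) := (algebraMap F K).injective
  set e : (V : Subring F) ≃+* R₀ := Subring.equivMapOfInjective V (algebraMap F K) hinj with he
  suffices hR : IsIntegral (R₀ : Subring K) y by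
    obtain ⟨q, hqm, hq0⟩ := hR
    refine ⟨q.map e.symm.toRingHom, hqm.map _, ?_⟩
    rw [Polynomial.eval₂_map]
    have : (algebraMap V K).comp e.symm.toRingHom = algebraMap R₀ K := by
      refine RingHom.ext fun r => ?_
      have : (e (e.symm r) : K) = (r : K) := by rw [e.apply_symm_apply]
      have h2 : algebraMap F K ((e.symm r : V) : F) = (r : K) := by
        rw [← this]; rfl
      exact h2
    rw [this]; exact hq0
  by_contra hni
  -- adjoin y⁻¹
  set T : Subalgebra R₀ K := Algebra.adjoin R₀ {y⁻¹} with hT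
  have hymem : y⁻¹ ∈ T := Algebra.self_mem_adjoin_singleton _ _
  set Tr : Subring K := T.toSubring with hTr
  have hymem' : y⁻¹ ∈ Tr := hymem
  -- y⁻¹ is not a unit in Tr
  have hyu : ¬ IsUnit (⟨y⁻¹, hymem'⟩ : Tr) := by
    intro hu
    obtain ⟨t, ht⟩ := isUnit_iff_exists_inv.mp hu
    have htK : y⁻¹ * (t : K) = 1 := by
      have := congrArg (fun a : Tr => (a : K)) ht
      simpa using this
    have htT : (t : K) ∈ T := t.2
    rw [hT, Algebra.adjoin_singleton_eq_range_aeval] at htT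
    obtain ⟨p, hp⟩ := htT
    have hp' : Polynomial.aeval (y⁻¹ : K) p = (t : K) := hp
    set q : Polynomial R₀ := X * p - 1 with hq
    have heval : eval₂ (algebraMap R₀ K) y⁻¹ q = 0 := by
      have : (Polynomial.aeval (y⁻¹ : K)) q = y⁻¹ * (t : K) - 1 := by
        simp [hq, map_sub, map_mul, map_one, Polynomial.aeval_X, hp']
      rw [← Polynomial.aeval_def, this, htK, sub_self]
    have hinv : y⁻¹ * y = 1 := inv_mul_cancel₀ hy0
    letI : Invertible (y⁻¹ : K) := invertibleOfNonzero (inv_ne_zero hy0)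
    have hrev : eval₂ (algebraMap R₀ K) y q.reverse = 0 := by
      have := (Polynomial.eval₂_reverse_eq_zero_iff (algebraMap R₀ K) (y⁻¹) q).mpr heval
      rwa [invOf_eq_right_inv hinv] at this
    have hc0 : q.coeff 0 = -1 := by
      simp [hq, Polynomial.mul_coeff_zero]
    have hqne : q ≠ 0 := fun hh => by simp [hh] at hc0
    have ht0 : q.natTrailingDegree = 0 := by
      rw [Polynomial.natTrailingDegree_eq_zero]
      exact Or.inr (by rw [hc0]; exact neg_ne_zero.mpr one_ne_zero)
    have hl : q.reverse.leadingCoeff = -1 := by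
      rw [Polynomial.reverse_leadingCoeff, Polynomial.trailingCoeff, ht0, hc0]
    refine hni ⟨-q.reverse, ?_, ?_⟩
    · rw [Polynomial.Monic, Polynomial.leadingCoeff_neg, hl, neg_neg]
    · rw [Polynomial.eval₂_neg, hrev, neg_zero]
  -- get a maximal ideal containing y⁻¹
  have hspan : Ideal.span {(⟨y⁻¹, hymem'⟩ : Tr)} ≠ ⊤ := by
    rw [Ne, Ideal.span_singleton_eq_top]; exact hyu
  obtain ⟨m', hm'max, hm'le⟩ := Ideal.exists_le_maximal _ hspan
  haveI := hm'max.isPrime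
  set B : LocalSubring K := LocalSubring.ofPrime Tr m' with hB
  obtain ⟨W, hBW⟩ := B.exists_le_valuationSubring
  -- V maps into W
  have hVW : ∀ v : F, v ∈ V → algebraMap F K v ∈ W := by
    intro v hv
    apply hBW.1
    apply LocalSubring.le_ofPrime Tr m'
    show algebraMap F K v ∈ Tr
    exact T.algebraMap_mem ⟨algebraMap F K v, Subring.mem_map.mpr ⟨v, hv, rfl⟩⟩
  have hyW : y ∈ W := h W hVW
  -- derive contradiction : image of y⁻¹ in B is a unit
  have hym' : (⟨y⁻¹, hymem'⟩ : Tr) ∈ m' := hm'le (Ideal.subset_span rfl)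
  have hyB : y⁻¹ ∈ B.toSubring := LocalSubring.le_ofPrime Tr m' hymem'
  have hWunit : IsUnit (Subring.inclusion hBW.1 (⟨y⁻¹, hyB⟩ : B.toSubring)) := by
    refine isUnit_iff_exists_inv.mpr ⟨⟨y, hyW⟩, ?_⟩
    ext
    exact inv_mul_cancel₀ hy0
  haveI := hBW.2
  have hBunit : IsUnit (⟨y⁻¹, hyB⟩ : B.toSubring) := IsLocalHom.map_nonunit _ hWunit
  have : IsUnit (algebraMap Tr (LocalSubring.ofPrime Tr m').toSubring ⟨y⁻¹, hymem'⟩) := hBunit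
  rw [IsLocalization.AtPrime.isUnit_to_map_iff _ m'] at this
  exact this hym'

/-- pivot lemma: among a list of nonzero field elements there is one "of minimal value". -/
lemma pivot_lemma (V : Subring F) (hV : ∀ x : F, x ∈ V ∨ x⁻¹ ∈ V) :
    ∀ l : List F, (∀ x ∈ l, x ≠ 0) → l ≠ [] → ∃ j ∈ l, ∀ i ∈ l, i / j ∈ V := by
  intro l
  induction l with
  | nil => intro _ h; exact absurd rfl h
  | cons a l ih =>
    intro hne _
    have ha : a ≠ 0 := hne a (List.mem_cons_self)
    by_cases hl : l = []
    · subst hl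
      refine ⟨a, List.mem_cons_self, ?_⟩
      intro i hi
      rcases List.mem_singleton.mp hi with rfl
      rw [div_self ha]; exact V.one_mem
    · obtain ⟨j, hjl, hj⟩ := ih (fun x hx => hne x (List.mem_cons_of_mem a hx)) hl
      have hjne : j ≠ 0 := hne j (List.mem_cons_of_mem a hjl)
      rcases hV (a / j) with h | h
      · refine ⟨j, List.mem_cons_of_mem a hjl, ?_⟩
        intro i hi
        rcases List.mem_cons.mp hi with rfl | hi
        · exact h
        · exact hj i hi
      · rw [inv_div] at h
        refine ⟨a, List.mem_cons_self, ?_⟩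
        intro i hi
        rcases List.mem_cons.mp hi with rfl | hi
        · rw [div_self ha]; exact V.one_mem
        · have := V.mul_mem (hj i hi) h
          rwa [div_mul_div_cancel₀ hjne] at this

lemma mul_mem_nonunits_vs (V₁ : ValuationSubring K) {a w : K} (ha : a ∈ V₁)
    (hw : w ∈ V₁.nonunits) : a * w ∈ V₁.nonunits := by
  rw [ValuationSubring.mem_nonunits_iff] at hw ⊢
  rw [map_mul]
  calc V₁.valuation a * V₁.valuation w ≤ 1 * V₁.valuation w :=
        mul_le_mul_left ((V₁.valuation_le_one_iff a).mpr ha) _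
    _ = V₁.valuation w := one_mul _
    _ < 1 := hw


/-- Every element of an extension `V₁` of `V` to `K` is a ratio `s / t` with `s, t`
integral over `V` and `t` a unit of `V₁`. -/
lemma exists_frac (V : Subring F) [Algebra.IsIntegral F K]
    (hV : ∀ x : F, x ∈ V ∨ x⁻¹ ∈ V)
    (V₁ : ValuationSubring K) (hVle : ∀ v : F, v ∈ V → algebraMap F K v ∈ V₁)
    {z : K} (hz : z ∈ V₁) :
    ∃ s t : K, IsIntegral (V : Subring F) s ∧ IsIntegral (V : Subring F) t ∧ t ∈ V₁ ∧
      t ∉ V₁.nonunits ∧ z * t = s := by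
  classical
  have hzi : IsIntegral F z := Algebra.IsIntegral.isIntegral z
  set p : Polynomial F := minpoly F z with hp
  set n : ℕ := p.natDegree with hn
  have hn1 : 1 ≤ n := minpoly.natDegree_pos hzi
  set c : ℕ → F := fun i => p.coeff i with hc
  set l : List F := ((List.range (n+1)).map c).filter (fun x => x ≠ 0) with hl
  have hlmem : ∀ x : F, x ∈ l ↔ (∃ i, i < n + 1 ∧ c i = x) ∧ x ≠ 0 := by
    intro x
    simp [hl, List.mem_filter, List.mem_map, List.mem_range]
  have hcn : c n = 1 := (minpoly.monic hzi).coeff_natDegree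
  have hlne : l ≠ [] := by
    intro h
    have : (1 : F) ∈ l := (hlmem 1).mpr ⟨⟨n, by omega, hcn⟩, one_ne_zero⟩
    rw [h] at this
    exact List.not_mem_nil this
  obtain ⟨cj, hcjl, hdivl⟩ := pivot_lemma V hV l
    (fun x hx => ((hlmem x).mp hx).2) hlne
  have hcjne : cj ≠ 0 := ((hlmem cj).mp hcjl).2
  obtain ⟨⟨j, hjlt, hjc⟩, -⟩ := (hlmem cj).mp hcjl
  have hjn : j ≤ n := by
    by_contra hh
    exact hcjne (hjc ▸ Polynomial.coeff_eq_zero_of_natDegree_lt (by omega))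
  set d : ℕ → F := fun i => c i / cj with hd
  have hdV : ∀ i, d i ∈ V := by
    intro i
    by_cases h0 : c i = 0
    · simp [hd, h0, V.zero_mem]
    · have hin : i < n + 1 := by
        by_contra hh
        exact h0 (Polynomial.coeff_eq_zero_of_natDegree_lt (by omega))
      exact hdivl (c i) ((hlmem (c i)).mpr ⟨⟨i, hin, rfl⟩, h0⟩)
  have hdj : d j = 1 := by rw [hd]; simp only []; rw [hjc, div_self hcjne]
  set D : ℕ → K := fun i => algebraMap F K (d i) with hD
  have hDj : D j = 1 := by rw [hD]; simp only []; rw [hdj, map_one]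
  -- the annihilating relation
  have h0sum : ∑ i ∈ Finset.range (n+1), algebraMap F K (c i) * z^i = 0 := by
    have h := minpoly.aeval F z
    rw [Polynomial.aeval_eq_sum_range] at h
    simpa [Algebra.smul_def] using h
  have hsum : ∑ i ∈ Finset.range (n+1), D i * z^i = 0 := by
    calc ∑ i ∈ Finset.range (n+1), D i * z^i
        = (∑ i ∈ Finset.range (n+1), algebraMap F K (c i) * z^i) * (algebraMap F K cj)⁻¹ := by
          rw [Finset.sum_mul]
          refine Finset.sum_congr rfl fun i _ => ?_
          rw [hD]; simp only []
          rw [hd]; simp only []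
          rw [map_div₀, div_eq_mul_inv]; ring
      _ = 0 := by rw [h0sum, zero_mul]
  -- the sequence
  set tt : ℕ → K := fun m => Nat.rec 0 (fun m ih => D (n - m) + z * ih) m with htt
  have htt0 : tt 0 = 0 := rfl
  have htts : ∀ m, tt (m+1) = D (n - m) + z * tt m := fun m => rfl
  have hm : ∀ m, m ≤ n + 1 → z^(n+1-m) * tt m = ∑ i ∈ Finset.Ico (n+1-m) (n+1), D i * z^i := by
    intro m
    induction m with
    | zero => intro _; simp [htt0]
    | succ m ih =>
      intro hm1
      have e1 : n+1-(m+1) = n-m := by omega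
      have e2 : n+1-m = (n-m)+1 := by omega
      have hlt : n - m < n + 1 := by omega
      have hih := ih (by omega)
      rw [e2] at hih
      rw [e1, htts m, Finset.sum_eq_sum_Ico_succ_bot hlt, mul_add, ← hih]
      ring
  have hs0 : tt (n+1) = 0 := by
    have h := hm (n+1) le_rfl
    rw [Nat.sub_self, pow_zero, one_mul, ← Finset.range_eq_Ico] at h
    rw [h, hsum]
  -- membership in all valuation overrings
  have hsW : ∀ (W : ValuationSubring K), (∀ v : F, v ∈ V → algebraMap F K v ∈ W) →
      ∀ m, m ≤ n + 1 → tt m ∈ W := by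
    intro W hW
    by_cases hzW : z ∈ W
    · intro m
      induction m with
      | zero => intro _; rw [htt0]; exact W.zero_mem
      | succ m ih =>
        intro h
        rw [htts]
        exact W.add_mem _ _ (hW _ (hdV _)) (W.mul_mem _ _ hzW (ih (by omega)))
    · have hz0 : z ≠ 0 := fun e => hzW (e ▸ W.zero_mem)
      have hzinv : z⁻¹ ∈ W := (W.mem_or_inv_mem z).resolve_left hzW
      intro m hmle
      set k : ℕ := n+1-m with hk
      have hzk : z^k ≠ 0 := pow_ne_zero _ hz0
      have h1 : z^k * tt m = ∑ i ∈ Finset.Ico k (n+1), D i * z^i := hm m hmle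
      have h2 : (∑ i ∈ Finset.range k, D i * z^i) +
          ∑ i ∈ Finset.Ico k (n+1), D i * z^i = 0 := by
        rw [Finset.sum_range_add_sum_Ico _ (by omega : k ≤ n+1)]
        exact hsum
      have h3 : tt m = -∑ i ∈ Finset.range k, D i * (z⁻¹)^(k-i) := by
        apply mul_left_cancel₀ hzk
        rw [h1, mul_neg, Finset.mul_sum]
        have hterm : ∀ i ∈ Finset.range k, z^k * (D i * (z⁻¹)^(k-i)) = D i * z^i := by
          intro i hi
          have hik : i ≤ k := le_of_lt (Finset.mem_range.mp hi)
          have hzsplit : z^k = z^i * z^(k-i) := by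
            rw [← pow_add]; congr 1; omega
          rw [hzsplit, inv_pow]
          have hne : z^(k-i) ≠ 0 := pow_ne_zero _ hz0
          field_simp
        rw [Finset.sum_congr rfl hterm]
        rw [add_comm] at h2
        exact eq_neg_of_add_eq_zero_left h2
      rw [h3]
      refine W.neg_mem _ (Subring.sum_mem W.toSubring fun i hi => W.mul_mem _ _ (hW _ (hdV _)) (W.toSubring.pow_mem hzinv _))
  -- integrality
  have hint : ∀ m, m ≤ n + 1 → IsIntegral (V : Subring F) (tt m) := fun m hmle =>
    isIntegral_of_mem_all V (fun W hW => hsW W hW m hmle)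
  -- find a unit index
  have hex : ∃ k, 1 ≤ k ∧ k ≤ n + 1 ∧ tt (n+1-k) ∉ V₁.nonunits := by
    by_contra hcon
    push_neg at hcon
    have h5 : tt (n - j) ∈ V₁.nonunits := by
      have := hcon (j+1) (by omega) (by omega)
      rwa [show n+1-(j+1) = n-j from by omega] at this
    have h6 : z * tt (n-j) ∈ V₁.nonunits := mul_mem_nonunits_vs V₁ hz h5
    have h7 : tt (n+1-j) ∈ V₁.nonunits := by
      by_cases hj0 : j = 0
      · subst hj0
        rw [Nat.sub_zero, hs0]
        rw [ValuationSubring.mem_nonunits_iff V₁, map_zero]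
        exact zero_lt_one
      · exact hcon j (by omega) (by omega)
    have h4 : tt (n+1-j) = D j + z * tt (n-j) := by
      rw [show n+1-j = (n-j)+1 from by omega, htts, show n-(n-j) = j from by omega]
    have hlt : V₁.valuation (tt (n+1-j) - z * tt (n-j)) < 1 :=
      lt_of_le_of_lt (V₁.valuation.map_sub _ _)
        (max_lt ((ValuationSubring.mem_nonunits_iff _).mp h7)
          ((ValuationSubring.mem_nonunits_iff _).mp h6))
    rw [show tt (n+1-j) - z * tt (n-j) = 1 from by rw [h4, hDj]; ring, map_one] at hlt
    exact lt_irrefl _ hlt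
  obtain ⟨k, hk1, hk2, hku⟩ := hex
  have heq : tt (n+1-(k-1)) = D (k-1) + z * tt (n+1-k) := by
    rw [show n+1-(k-1) = (n-(k-1))+1 from by omega, htts,
      show n-(n-(k-1)) = k-1 from by omega, show n-(k-1) = n+1-k from by omega]
  refine ⟨tt (n+1-(k-1)) - D (k-1), tt (n+1-k), ?_, hint _ (by omega),
    hsW V₁ hVle _ (by omega), hku, ?_⟩
  · refine (hint _ (by omega)).sub ?_
    exact isIntegral_algebraMap (x := (⟨d (k-1), hdV (k-1)⟩ : V))
  · rw [heq]; ring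

end Aux

set_option maxHeartbeats 2000000 in
set_option synthInstance.maxHeartbeats 1000000 in
/-- Let `V` be a valuation ring of `F`, `K/F` a finite Galois extension in which `V` is
unramified and defectless (equivalently: every extension of `V` to `K` has trivial
inertial group), `S` the integral closure of `V` in `K`, `V₁` a valuation ring of `K`
lying over `V`, and `M = J(V₁) ∩ S`.  Then `M² = J(V₁)² ∩ S`. -/
theorem stmt8 (F K : Type*) [Field F] [Field K] [Algebra F K]
    [FiniteDimensional F K] [IsGalois F K]
    (V : Subring F) (hV : ∀ x : F, x ∈ V ∨ x⁻¹ ∈ V)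
    (hunram : ∀ W : ValuationSubring K, (W.comap (algebraMap F K)).toSubring = V →
      ∀ σ : K ≃ₐ[F] K, (∀ x ∈ W, σ x - x ∈ W.nonunits) → σ = 1)
    (V₁ : ValuationSubring K) (hover : (V₁.comap (algebraMap F K)).toSubring = V)
    (M N : Ideal (integralClosure V K))
    (hM : ∀ x : integralClosure V K, x ∈ M ↔ (x : K) ∈ V₁.nonunits)
    (hN : ∀ x : integralClosure V K, x ∈ N ↔
      ∃ y : V₁, y ∈ (IsLocalRing.maximalIdeal V₁) ^ 2 ∧ (y : K) = (x : K)) :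
    M ^ 2 = N := by
  classical
  have hmemV : ∀ a : F, a ∈ V ↔ algebraMap F K a ∈ V₁ := by
    intro a; rw [← hover]; exact Iff.rfl
  have hVle : ∀ v : F, v ∈ V → algebraMap F K v ∈ V₁ := fun v hv => (hmemV v).mp hv
  have hSV₁ : ∀ x : integralClosure V K, (x : K) ∈ V₁ :=
    fun x => integral_mem_vs V V₁ hVle x.2
  -- a member of V whose image is a V₁-unit is a unit of V
  have hunit : ∀ v : V, algebraMap F K (v : F) ∉ V₁.nonunits → IsUnit v := by
    intro v hv
    have hmem1 : algebraMap F K (v : F) ∈ V₁ := hVle _ v.2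
    have hv0 : (v : F) ≠ 0 := by
      rintro h0
      apply hv
      rw [h0, map_zero, ValuationSubring.mem_nonunits_iff V₁, map_zero]
      exact zero_lt_one
    have hval : V₁.valuation (algebraMap F K (v : F)) = 1 := by
      have h1 := (V₁.valuation_le_one_iff _).mpr hmem1
      have h2 : ¬ V₁.valuation (algebraMap F K (v : F)) < 1 :=
        fun hh => hv ((ValuationSubring.mem_nonunits_iff _).mpr hh)
      exact le_antisymm h1 (not_lt.mp h2)
    have hinv : algebraMap F K ((v : F)⁻¹) ∈ V₁ := by
      rw [map_inv₀, ← V₁.valuation_le_one_iff, map_inv₀, hval, inv_one]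
    have hinvV : (v : F)⁻¹ ∈ V := (hmemV _).mpr hinv
    exact isUnit_iff_exists_inv.mpr ⟨⟨(v : F)⁻¹, hinvV⟩, Subtype.ext (mul_inv_cancel₀ hv0)⟩
  have hM1 : (1 : integralClosure V K) ∉ M := by
    intro h
    have h2 := (hM 1).mp h
    rw [show ((1 : integralClosure V K) : K) = 1 from rfl,
      ValuationSubring.mem_nonunits_iff V₁, map_one] at h2
    exact lt_irrefl _ h2
  have hMprime : M.IsPrime := by
    rw [Ideal.isPrime_iff]
    refine ⟨fun hMt => hM1 (hMt ▸ Submodule.mem_top), ?_⟩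
    intro x y hxy
    by_contra hcon
    push_neg at hcon
    obtain ⟨hx, hy⟩ := hcon
    have hvx : V₁.valuation (x : K) = 1 :=
      le_antisymm ((V₁.valuation_le_one_iff _).mpr (hSV₁ x))
        (not_lt.mp fun hh => hx ((hM x).mpr ((ValuationSubring.mem_nonunits_iff _).mpr hh)))
    have hvy : V₁.valuation (y : K) = 1 :=
      le_antisymm ((V₁.valuation_le_one_iff _).mpr (hSV₁ y))
        (not_lt.mp fun hh => hy ((hM y).mpr ((ValuationSubring.mem_nonunits_iff _).mpr hh)))
    have h2 := (hM _).mp hxy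
    rw [ValuationSubring.mem_nonunits_iff _,
      show (((x*y : integralClosure V K)) : K) = (x : K) * (y : K) from by push_cast; ring,
      map_mul, hvx, hvy, mul_one] at h2
    exact lt_irrefl _ h2
  haveI := hMprime
  have hMcomax : (Ideal.comap (algebraMap V (integralClosure V K)) M).IsMaximal := by
    rw [Ideal.isMaximal_iff]
    constructor
    · intro h
      have := Ideal.mem_comap.mp h
      rw [map_one] at this
      exact hM1 this
    · intro J x hle hxnot hxJ
      have hxM : algebraMap V (integralClosure V K) x ∉ M :=
        fun h => hxnot (Ideal.mem_comap.mpr h)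
      have hnn : algebraMap F K (x : F) ∉ V₁.nonunits := fun h => hxM ((hM _).mpr h)
      obtain ⟨x', hx'⟩ := isUnit_iff_exists_inv.mp (hunit x hnn)
      exact hx' ▸ J.mul_mem_right x' hxJ
  have hMmax : M.IsMaximal :=
    Ideal.isMaximal_of_isIntegral_of_isMaximal_comap (R := V) M hMcomax
  -- easy inclusion
  have h1 : M ^ 2 ≤ N := by
    rw [pow_two, Ideal.mul_le]
    intro r hr s hs
    refine (hN _).mpr ⟨⟨(r : K), hSV₁ r⟩ * ⟨(s : K), hSV₁ s⟩, ?_, by push_cast; ring⟩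
    rw [pow_two]
    exact Ideal.mul_mem_mul
      ((ValuationSubring.coe_mem_nonunits_iff (a := ⟨(r : K), hSV₁ r⟩)).mp ((hM r).mp hr))
      ((ValuationSubring.coe_mem_nonunits_iff (a := ⟨(s : K), hSV₁ s⟩)).mp ((hM s).mp hs))
  refine le_antisymm h1 ?_
  intro x hx
  obtain ⟨y, hy2, hyx⟩ := (hN x).mp hx
  have hprod : ∃ a b : V₁, a ∈ IsLocalRing.maximalIdeal V₁ ∧
      b ∈ IsLocalRing.maximalIdeal V₁ ∧ y = a * b := by
    rw [pow_two] at hy2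
    refine Submodule.mul_induction_on hy2 (fun r hr s hs => ⟨r, s, hr, hs, rfl⟩) ?_
    rintro y₁ y₂ ⟨a₁, b₁, ha₁, hb₁, rfl⟩ ⟨a₂, b₂, ha₂, hb₂, rfl⟩
    obtain ⟨cc, hcc | hcc⟩ := ValuationRing.cond (a₁ * b₁) (a₂ * b₂)
    · exact ⟨a₁, b₁ * (1 + cc), ha₁, Ideal.mul_mem_right _ _ hb₁, by rw [← hcc]; ring⟩
    · exact ⟨a₂, b₂ * (1 + cc), ha₂, Ideal.mul_mem_right _ _ hb₂, by rw [← hcc]; ring⟩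
  obtain ⟨a, b, ha, hb, hy⟩ := hprod
  have hanu : (a : K) ∈ V₁.nonunits := ValuationSubring.coe_mem_nonunits_iff.mpr ha
  have hbnu : (b : K) ∈ V₁.nonunits := ValuationSubring.coe_mem_nonunits_iff.mpr hb
  obtain ⟨s1, t1, hs1i, ht1i, ht1V, ht1u, he1⟩ := exists_frac V hV V₁ hVle a.2
  obtain ⟨s2, t2, hs2i, ht2i, ht2V, ht2u, he2⟩ := exists_frac V hV V₁ hVle b.2
  set Sa : integralClosure V K := ⟨s1, hs1i⟩ with hSadef
  set Sb : integralClosure V K := ⟨s2, hs2i⟩ with hSbdef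
  set Ta : integralClosure V K := ⟨t1, ht1i⟩ with hTadef
  set Tb : integralClosure V K := ⟨t2, ht2i⟩ with hTbdef
  have hs1M : Sa ∈ M := (hM _).mpr (by
    show s1 ∈ V₁.nonunits
    rw [← he1, mul_comm]
    exact mul_mem_nonunits_vs V₁ ht1V hanu)
  have hs2M : Sb ∈ M := (hM _).mpr (by
    show s2 ∈ V₁.nonunits
    rw [← he2, mul_comm]
    exact mul_mem_nonunits_vs V₁ ht2V hbnu)
  have hTaM : Ta ∉ M := fun h => ht1u ((hM _).mp h)
  have hTbM : Tb ∉ M := fun h => ht2u ((hM _).mp h)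
  have hxab : (x : K) = (a : K) * (b : K) := by rw [← hyx, hy]; push_cast; ring
  have hxcd : x * (Ta * Tb) = Sa * Sb := by
    apply Subtype.ext
    push_cast
    show (x : K) * (t1 * t2) = s1 * s2
    rw [← he1, ← he2, hxab]
    ring
  have hSS : Sa * Sb ∈ M ^ 2 := by rw [pow_two]; exact Ideal.mul_mem_mul hs1M hs2M
  apply Ideal.mem_of_localization_maximal
  intro P hP
  by_cases hMP : M ≤ P
  · have hMeq : M = P := hMmax.eq_of_le hP.ne_top hMP
    subst hMeq
    have hTP : Ta * Tb ∈ M.primeCompl := by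
      intro h
      rcases hMprime.mem_or_mem h with h | h
      exacts [hTaM h, hTbM h]
    have huP : IsUnit (algebraMap _ (Localization.AtPrime M) (Ta * Tb)) :=
      IsLocalization.map_units _ (⟨Ta * Tb, hTP⟩ : M.primeCompl)
    obtain ⟨w, hw⟩ := huP.exists_right_inv
    have himg : algebraMap _ (Localization.AtPrime M) x =
        algebraMap _ (Localization.AtPrime M) (Sa * Sb) * w := by
      calc algebraMap _ (Localization.AtPrime M) x
          = algebraMap _ (Localization.AtPrime M) x *
            (algebraMap _ (Localization.AtPrime M) (Ta * Tb) * w) := by rw [hw, mul_one]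
        _ = algebraMap _ (Localization.AtPrime M) (x * (Ta * Tb)) * w := by
            simp only [map_mul]; ring
        _ = algebraMap _ (Localization.AtPrime M) (Sa * Sb) * w := by rw [hxcd]
    rw [himg]
    exact Ideal.mul_mem_right w _ (Ideal.mem_map_of_mem _ hSS)
  · obtain ⟨m, hmM, hmP⟩ := SetLike.not_le_iff_exists.mp hMP
    have hm2 : m * m ∈ M ^ 2 := by rw [pow_two]; exact Ideal.mul_mem_mul hmM hmM
    have hmP2 : m * m ∈ P.primeCompl := by
      intro h
      rcases hP.isPrime.mem_or_mem h with h | h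
      exacts [hmP h, hmP h]
    have hu : IsUnit (algebraMap _ (Localization.AtPrime P) (m * m)) :=
      IsLocalization.map_units _ (⟨m * m, hmP2⟩ : P.primeCompl)
    have htop : Ideal.map (algebraMap _ (Localization.AtPrime P)) (M ^ 2) = ⊤ :=
      Ideal.eq_top_of_isUnit_mem _ (Ideal.mem_map_of_mem _ hm2) hu
    rw [htop]
    exact Submodule.mem_top
end

section
/- With notation as in the crossed-product setting (V a valuation ring unramified and defectless in the finite Galois extension K, S the integral closure of V in K, f : G×G → S\{0} a normalized 2-cocycle, A_f = ⊕_σ S x_σ): if the crossed-product order A_f is an Azumaya algebra over V, then f(σ,σ⁻¹) is a unit of S for every σ ∈ G, i.e., H = G. -/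
open TensorProduct in
/-- The natural map `A ⊗[R] Aᵐᵒᵖ → End_R(A)`, `a ⊗ b ↦ (x ↦ a * x * b)`. -/
noncomputable def azumayaMap (R A : Type*) [CommRing R] [Ring A] [Algebra R A] :
    A ⊗[R] Aᵐᵒᵖ →ₐ[R] Module.End R A :=
  Algebra.TensorProduct.lift (Algebra.lmul R A)
    { toFun := fun b => LinearMap.mulRight R b.unop
      map_one' := by ext x; simp
      map_mul' := by intro a b; ext x; simp [mul_assoc]
      map_zero' := by ext x; simp
      map_add' := by intro a b; ext x; simp [mul_add]
      commutes' := by intro r; ext x; simp [Algebra.smul_def]; exact (Algebra.commutes r x).symm }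
    (by intro a b; exact LinearMap.commute_mulLeft_right a b.unop)

/-- `A` is an Azumaya algebra over `R`: it is a finitely generated projective faithful
`R`-module and the natural map `A ⊗[R] Aᵐᵒᵖ → End_R(A)` is bijective. -/
def IsAzumayaAlg (R A : Type*) [CommRing R] [Ring A] [Algebra R A] : Prop :=
  Module.Finite R A ∧ Module.Projective R A ∧ FaithfulSMul R A ∧
    Function.Bijective (azumayaMap R A)

open TensorProduct in
/-- Over a local ring, a two-sided ideal of an Azumaya algebra containing an element
outside `m • A` must be everything. -/
lemma azumaya_ideal_eq_top' {R A : Type*} [CommRing R] [IsLocalRing R] [Ring A] [Algebra R A]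
    (hAz : IsAzumayaAlg R A) (I : Submodule R A)
    (hmul : ∀ (u w : A), ∀ i ∈ I, u * i * w ∈ I)
    (a : A) (ha : a ∈ I)
    (ha' : a ∉ (IsLocalRing.maximalIdeal R) • (⊤ : Submodule R A)) : I = ⊤ := by
  obtain ⟨hfin, hproj, -, hbij⟩ := hAz
  set m := IsLocalRing.maximalIdeal R with hm
  set N : Submodule R A := I ⊔ m • ⊤ with hN
  have hsmulstab : ∀ (φ : Module.End R A), ∀ y ∈ m • (⊤ : Submodule R A),
      φ y ∈ m • (⊤ : Submodule R A) := by
    intro φ y hy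
    have h2 : φ y ∈ (m • (⊤ : Submodule R A)).map φ := Submodule.mem_map_of_mem hy
    rw [Submodule.map_smul''] at h2
    exact Submodule.smul_mono le_rfl le_top h2
  have hIstab : ∀ (z : A ⊗[R] Aᵐᵒᵖ), ∀ i ∈ I, azumayaMap R A z i ∈ N := by
    intro z
    induction z using TensorProduct.induction_on with
    | zero => intro i hi; rw [map_zero]; exact N.zero_mem
    | tmul u w =>
        intro i hi
        have hval : azumayaMap R A (u ⊗ₜ[R] w) i = u * i * w.unop := by
          simp [azumayaMap, Algebra.TensorProduct.lift_tmul, Module.End.mul_apply, mul_assoc]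
          rfl
        rw [hval]
        exact Submodule.mem_sup_left (hmul u w.unop i hi)
    | add z₁ z₂ h₁ h₂ =>
        intro i hi
        rw [map_add]
        exact N.add_mem (h₁ i hi) (h₂ i hi)
  have hNstab : ∀ (φ : Module.End R A), ∀ y ∈ N, φ y ∈ N := by
    intro φ y hy
    obtain ⟨z, rfl⟩ := hbij.2 φ
    obtain ⟨i, hi, w, hw, rfl⟩ := Submodule.mem_sup.mp hy
    rw [map_add]
    exact N.add_mem (hIstab z i hi) (Submodule.mem_sup_right (hsmulstab _ w hw))
  have hNtop : N = ⊤ := by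
    obtain ⟨s, hs⟩ := Module.projective_def'.mp hproj
    have hcoord : ∃ k : A, (s a) k ∉ m := by
      by_contra hall
      push_neg at hall
      apply ha'
      have ha2 : a = Finsupp.linearCombination R id (s a) := by
        rw [← LinearMap.comp_apply, hs]; rfl
      rw [ha2, Finsupp.linearCombination_apply]
      apply Submodule.finsuppSum_mem
      intro k _
      exact Submodule.smul_mem_smul (hall k) Submodule.mem_top
    obtain ⟨k, hk⟩ := hcoord
    have hu : IsUnit ((s a) k) := by
      by_contra h
      exact hk (IsLocalRing.mem_maximalIdeal _ |>.mpr h)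
    rw [eq_top_iff]
    intro b _
    set φ : Module.End R A :=
      (LinearMap.toSpanSingleton R A b) ∘ₗ (Finsupp.lapply k) ∘ₗ s with hφ
    have hφa : φ a = (s a) k • b := by
      simp [hφ, LinearMap.toSpanSingleton_apply]
    have h3 : (s a) k • b ∈ N := by
      rw [← hφa]; exact hNstab φ a (Submodule.mem_sup_left ha)
    have h4 := N.smul_mem (↑hu.unit⁻¹) h3
    rwa [smul_smul, IsUnit.val_inv_mul, one_smul] at h4
  have hquot : (⊤ : Submodule R (A ⧸ I)) ≤ m • ⊤ := by
    have h5 : Submodule.map I.mkQ N = (⊤ : Submodule R (A ⧸ I)) := by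
      rw [hNtop, Submodule.map_top, Submodule.range_mkQ]
    rw [hN, Submodule.map_sup, Submodule.map_smul''] at h5
    have h6 : Submodule.map I.mkQ I = ⊥ := by
      rw [eq_bot_iff]
      rintro y ⟨i, hi, rfl⟩
      simp [Submodule.mkQ_apply, (Submodule.Quotient.mk_eq_zero I).mpr hi]
    rw [h6, bot_sup_eq] at h5
    exact le_of_eq_of_le h5.symm (Submodule.smul_mono le_rfl le_top)
  have hfg : (⊤ : Submodule R (A ⧸ I)).FG := by
    have : Module.Finite R (A ⧸ I) :=
      Module.Finite.of_surjective I.mkQ (Submodule.mkQ_surjective I)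
    exact Module.Finite.fg_top
  have hjac : m ≤ (⊥ : Ideal R).jacobson := by
    rw [IsLocalRing.jacobson_eq_maximalIdeal ⊥ bot_ne_top]
  have hbot := Submodule.eq_bot_of_le_smul_of_le_jacobson_bot m ⊤ hfg hquot hjac
  rw [eq_top_iff]
  intro b _
  have hb : I.mkQ b ∈ (⊤ : Submodule R (A ⧸ I)) := Submodule.mem_top
  rw [hbot] at hb
  exact (Submodule.Quotient.mk_eq_zero I).mp hb

section CrossedHelpers

variable {F K : Type*} [Field F] [Field K] [Algebra F K] {V : Subring F}

/-- The restriction of a Galois automorphism to the integral closure, as a ring hom. -/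
def ehom (hstabS : ∀ (σ : K ≃ₐ[F] K) (s : integralClosure V K),
    σ (s : K) ∈ integralClosure V K) (σ : K ≃ₐ[F] K) :
    integralClosure V K →+* integralClosure V K where
  toFun s := ⟨σ (s : K), hstabS σ s⟩
  map_one' := by ext; simp
  map_mul' a b := by ext; simp
  map_zero' := by ext; simp
  map_add' a b := by ext; simp

@[simp] lemma ehom_coe (hstabS : ∀ (σ : K ≃ₐ[F] K) (s : integralClosure V K),
    σ (s : K) ∈ integralClosure V K) (σ : K ≃ₐ[F] K) (s : integralClosure V K) :
    (ehom hstabS σ s : K) = σ (s : K) := rfl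

lemma ehom_ehom (hstabS : ∀ (σ : K ≃ₐ[F] K) (s : integralClosure V K),
    σ (s : K) ∈ integralClosure V K) (σ τ : K ≃ₐ[F] K) (s : integralClosure V K) :
    ehom hstabS σ (ehom hstabS τ s) = ehom hstabS (σ * τ) s := by
  ext
  simp [AlgEquiv.mul_apply]

lemma ehom_one (hstabS : ∀ (σ : K ≃ₐ[F] K) (s : integralClosure V K),
    σ (s : K) ∈ integralClosure V K) (s : integralClosure V K) :
    ehom hstabS 1 s = s := by
  ext
  simp

/-- The cocycle values as elements of the integral closure. -/
def fS (f : (K ≃ₐ[F] K) → (K ≃ₐ[F] K) → K)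
    (hfS : ∀ σ τ, f σ τ ∈ integralClosure V K) (σ τ : K ≃ₐ[F] K) :
    integralClosure V K := ⟨f σ τ, hfS σ τ⟩

@[simp] lemma fS_coe (f : (K ≃ₐ[F] K) → (K ≃ₐ[F] K) → K)
    (hfS : ∀ σ τ, f σ τ ∈ integralClosure V K) (σ τ : K ≃ₐ[F] K) :
    (fS f hfS σ τ : K) = f σ τ := rfl

end CrossedHelpers

set_option maxHeartbeats 1000000 in
set_option synthInstance.maxHeartbeats 100000 in
/-- Let `V` be a valuation ring of `F`, unramified and defectless in the finite Galois
extension `K/F` (trivial inertial groups), `S` the integral closure of `V` in `K`, and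
`f : G×G → S\{0}` a normalized 2-cocycle all of whose values are units of `S` (`H = G`).
If the crossed product order `A_f = ⊕_σ S·x_σ` is an Azumaya algebra over `V`, then
`f(σ,σ⁻¹)` is a unit of `S` for every `σ ∈ G`, i.e. `H = G`. -/
theorem stmt15 (F K : Type*) [Field F] [Field K] [Algebra F K]
    [FiniteDimensional F K] [IsGalois F K]
    (V : Subring F) [ValuationRing V] (hV : ∀ x : F, x ∈ V ∨ x⁻¹ ∈ V)
    (hunram : ∀ W : ValuationSubring K, (W.comap (algebraMap F K)).toSubring = V →
      ∀ σ : K ≃ₐ[F] K, (∀ x ∈ W, σ x - x ∈ W.nonunits) → σ = 1)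
    (f : (K ≃ₐ[F] K) → (K ≃ₐ[F] K) → K)
    (hfS : ∀ σ τ, f σ τ ∈ integralClosure V K)
    (hf0 : ∀ σ τ, f σ τ ≠ 0)
    (hcoc : ∀ σ τ ρ, σ (f τ ρ) * f σ (τ * ρ) = f σ τ * f (σ * τ) ρ)
    (hnorm : ∀ σ, f 1 σ = 1 ∧ f σ 1 = 1)
    (hstabS : ∀ (σ : K ≃ₐ[F] K) (s : integralClosure V K),
      σ (s : K) ∈ integralClosure V K)
    -- the crossed product algebra `A_f`, axiomatized:
    (A : Type*) [Ring A] [Algebra V A]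
    (ι : (integralClosure V K) →+* A) (x : (K ≃ₐ[F] K) → A)
    (hbasis : ∀ a : A, ∃! c : (K ≃ₐ[F] K) → (integralClosure V K),
      a = ∑ σ : K ≃ₐ[F] K, ι (c σ) * x σ)
    (hxs : ∀ (σ : K ≃ₐ[F] K) (s : integralClosure V K),
      x σ * ι s = ι ⟨σ (s : K), hstabS σ s⟩ * x σ)
    (hxx : ∀ σ τ, x σ * x τ = ι ⟨f σ τ, hfS σ τ⟩ * x (σ * τ))
    (hx1 : x 1 = 1)
    (halg : ∀ v : V, algebraMap V A v = ι (algebraMap V (integralClosure V K) v))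
    (hAz : IsAzumayaAlg V A) :
    ∀ σ : K ≃ₐ[F] K, IsUnit (⟨f σ σ⁻¹, hfS σ σ⁻¹⟩ : integralClosure V K) := by
  intro σ₀
  by_contra hns
  classical
  have hxs1 : ∀ (σ : K ≃ₐ[F] K) (s : integralClosure V K),
      x σ * ι s = ι (ehom hstabS σ s) * x σ := fun σ s => hxs σ s
  have hxx1 : ∀ σ τ : K ≃ₐ[F] K, x σ * x τ = ι (fS f hfS σ τ) * x (σ * τ) :=
    fun σ τ => hxx σ τ
  have hxs2 : ∀ (σ : K ≃ₐ[F] K) (s : integralClosure V K) (z : A),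
      x σ * (ι s * z) = ι (ehom hstabS σ s) * (x σ * z) := by
    intro σ s z; rw [← mul_assoc, hxs1, mul_assoc]
  have hxx2 : ∀ (σ τ : K ≃ₐ[F] K) (z : A),
      x σ * (x τ * z) = ι (fS f hfS σ τ) * (x (σ * τ) * z) := by
    intro σ τ z; rw [← mul_assoc, hxx1, mul_assoc]
  have hii2 : ∀ (a b : integralClosure V K) (z : A), ι a * (ι b * z) = ι (a * b) * z := by
    intro a b z; rw [← mul_assoc, ← map_mul]
  -- the cocycle identity inside the integral closure
  have hcoc' : ∀ σ τ ρ : K ≃ₐ[F] K,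
      ehom hstabS σ (fS f hfS τ ρ) * fS f hfS σ (τ * ρ)
        = fS f hfS σ τ * fS f hfS (σ * τ) ρ := by
    intro σ τ ρ
    apply Subtype.ext
    push_cast
    exact hcoc σ τ ρ
  have hnorm1 : ∀ σ : K ≃ₐ[F] K, fS f hfS 1 σ = 1 :=
    fun σ => Subtype.ext (by simpa using (hnorm σ).1)
  have hnorm2 : ∀ σ : K ≃ₐ[F] K, fS f hfS σ 1 = 1 :=
    fun σ => Subtype.ext (by simpa using (hnorm σ).2)
  -- coefficients
  have hex : ∀ a : A, ∃ c : (K ≃ₐ[F] K) → (integralClosure V K),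
      a = ∑ σ : K ≃ₐ[F] K, ι (c σ) * x σ := fun a => (hbasis a).exists
  choose co hco using hex
  have uniq : ∀ (a : A) (c : (K ≃ₐ[F] K) → (integralClosure V K)),
      a = ∑ σ : K ≃ₐ[F] K, ι (c σ) * x σ → co a = c :=
    fun a c h => (hbasis a).unique (hco a) h
  have hcoSingle : ∀ (y : integralClosure V K) (h : K ≃ₐ[F] K),
      co (ι y * x h) = fun g => if g = h then y else 0 := by
    intro y h
    refine uniq _ _ ?_
    show ι y * x h = ∑ σ : K ≃ₐ[F] K, ι (if σ = h then y else 0) * x σ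
    have h1 : ∀ g : K ≃ₐ[F] K, ι (if g = h then y else 0) * x g
        = if g = h then ι y * x h else 0 := by
      intro g
      by_cases hg : g = h
      · simp [hg]
      · simp [hg]
    rw [Finset.sum_congr rfl fun g _ => h1 g, Fintype.sum_ite_eq' h]
  have hcoAdd : ∀ a b : A, co (a + b) = fun g => co a g + co b g := by
    intro a b
    refine uniq _ _ ?_
    show a + b = ∑ σ : K ≃ₐ[F] K, ι (co a σ + co b σ) * x σ
    have h1 : ∀ g : K ≃ₐ[F] K,
        ι (co a g + co b g) * x g = ι (co a g) * x g + ι (co b g) * x g := by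
      intro g; rw [ι.map_add, add_mul]
    rw [Finset.sum_congr rfl fun g _ => h1 g, Finset.sum_add_distrib, ← hco a, ← hco b]
  have hcoZero : co (0 : A) = fun _ => 0 := by
    refine uniq _ _ ?_
    simp
  have hcoMul : ∀ (y : integralClosure V K) (a : A),
      co (ι y * a) = fun g => y * co a g := by
    intro y a
    refine uniq _ _ ?_
    show ι y * a = ∑ σ : K ≃ₐ[F] K, ι (y * co a σ) * x σ
    conv_lhs => rw [hco a]
    rw [Finset.mul_sum]
    exact Finset.sum_congr rfl fun g _ => by rw [← mul_assoc, ← map_mul]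
  have hcoSmul : ∀ (v : V) (a : A),
      co (v • a) = fun g => algebraMap V (integralClosure V K) v * co a g := by
    intro v a
    rw [Algebra.smul_def, halg, hcoMul]
  have hcoOne : co (1 : A) = fun g => if g = 1 then 1 else 0 := by
    have h1 : (1 : A) = ι 1 * x 1 := by rw [map_one, hx1, one_mul]
    rw [h1, hcoSingle]
  -- the maximal ideal M of the integral closure containing f(σ₀, σ₀⁻¹)
  obtain ⟨M, hMmax, hFM⟩ := Ideal.exists_le_maximal (Ideal.span {fS f hfS σ₀ σ₀⁻¹})
    (by rw [Ne, Ideal.span_singleton_eq_top]; exact hns)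
  have hF₀M : fS f hfS σ₀ σ₀⁻¹ ∈ M := hFM (Ideal.subset_span rfl)
  haveI := hMmax
  have hP : M.IsPrime := hMmax.isPrime
  have hmulnm : ∀ a b : integralClosure V K, a ∉ M → b ∉ M → a * b ∉ M := by
    intro a b ha hb hab
    exact (hP.mem_or_mem hab).elim ha hb
  -- the maximal ideal of V maps into M
  have hintmax : (M.comap (algebraMap V (integralClosure V K))).IsMaximal :=
    Ideal.isMaximal_comap_of_isIntegral_of_isMaximal M
  have hcomapm : M.comap (algebraMap V (integralClosure V K)) = IsLocalRing.maximalIdeal V :=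
    IsLocalRing.eq_maximalIdeal hintmax
  have hmM : ∀ v : V, v ∈ IsLocalRing.maximalIdeal V →
      algebraMap V (integralClosure V K) v ∈ M := by
    intro v hv
    rw [← hcomapm] at hv
    exact hv
  -- surjectivity of the automorphisms, maximality of the pulled-back ideals
  have hesurj : ∀ τ : K ≃ₐ[F] K, Function.Surjective (ehom hstabS τ) := by
    intro τ y
    exact ⟨ehom hstabS τ⁻¹ y, by rw [ehom_ehom, mul_inv_cancel, ehom_one]⟩
  have hcomax : ∀ τ : K ≃ₐ[F] K, (M.comap (ehom hstabS τ)).IsMaximal := fun τ =>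
    Ideal.comap_isMaximal_of_surjective (ehom hstabS τ) (hesurj τ)
  -- choice of s₀ : in all Galois conjugates of M different from M, but not in M
  set T : Finset (K ≃ₐ[F] K) :=
    Finset.univ.filter (fun τ => M.comap (ehom hstabS τ) ≠ M) with hT
  have hinf : ¬ (T.inf (fun τ => M.comap (ehom hstabS τ)) ≤ M) := by
    intro hle
    have hprod : (T.prod fun τ => M.comap (ehom hstabS τ)) ≤ M :=
      le_trans Ideal.prod_le_inf hle
    obtain ⟨τ, hτT, hτle⟩ := (hP.prod_le).mp hprod
    have heq := (hcomax τ).eq_of_le hMmax.ne_top hτle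
    rw [hT] at hτT
    exact (Finset.mem_filter.mp hτT).2 heq
  obtain ⟨s₀, hs₀inf, hs₀M⟩ := SetLike.not_le_iff_exists.mp hinf
  have hs₀D : ∀ τ : K ≃ₐ[F] K, ehom hstabS τ s₀ ∉ M → M.comap (ehom hstabS τ) = M := by
    intro τ hτ
    by_contra hne
    have hmem : τ ∈ T := by
      rw [hT]; exact Finset.mem_filter.mpr ⟨Finset.mem_univ τ, hne⟩
    have hle := Finset.inf_le (f := fun τ => M.comap (ehom hstabS τ)) hmem
    exact hτ (hle hs₀inf)
  -- the two-sided ideal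
  set gens : Set A :=
    {b | ∃ (s t : integralClosure V K) (τ ρ : K ≃ₐ[F] K),
      b = ι s * x τ * ι s₀ * x σ₀ * ι t * x ρ} with hgens
  -- closure of generators under ring multiplications
  have hGL1 : ∀ b ∈ gens, ∀ c : integralClosure V K, ι c * b ∈ gens := by
    intro b hb c
    rw [hgens] at hb ⊢
    obtain ⟨s, t, τ, ρ, rfl⟩ := hb
    refine ⟨c * s, t, τ, ρ, ?_⟩
    simp only [mul_assoc]
    rw [hii2]
  have hGL2 : ∀ b ∈ gens, ∀ w : K ≃ₐ[F] K, x w * b ∈ gens := by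
    intro b hb w
    rw [hgens] at hb ⊢
    obtain ⟨s, t, τ, ρ, rfl⟩ := hb
    refine ⟨ehom hstabS w s * fS f hfS w τ, t, w * τ, ρ, ?_⟩
    simp only [mul_assoc]
    rw [hxs2, hxx2, hii2]
  have hGR1 : ∀ b ∈ gens, ∀ c : integralClosure V K, b * ι c ∈ gens := by
    intro b hb c
    rw [hgens] at hb ⊢
    obtain ⟨s, t, τ, ρ, rfl⟩ := hb
    refine ⟨s, t * ehom hstabS ρ c, τ, ρ, ?_⟩
    simp only [mul_assoc]
    rw [hxs1 ρ c, hii2]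
  have hGR2 : ∀ b ∈ gens, ∀ w : K ≃ₐ[F] K, b * x w ∈ gens := by
    intro b hb w
    rw [hgens] at hb ⊢
    obtain ⟨s, t, τ, ρ, rfl⟩ := hb
    refine ⟨s, t * fS f hfS ρ w, τ, ρ * w, ?_⟩
    simp only [mul_assoc]
    rw [hxx1 ρ w, hii2]
  -- closure of the span under arbitrary multiplications
  have hIIL : ∀ (u : A), ∀ b ∈ Submodule.span V gens, u * b ∈ Submodule.span V gens := by
    intro u b hb
    induction hb using Submodule.span_induction with
    | mem b hbg =>
        rw [hco u, Finset.sum_mul]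
        refine Submodule.sum_mem _ ?_
        intro g _
        rw [mul_assoc]
        exact Submodule.subset_span (hGL1 _ (hGL2 _ hbg g) _)
    | zero => rw [mul_zero]; exact Submodule.zero_mem _
    | add y z _ _ hy hz => rw [mul_add]; exact Submodule.add_mem _ hy hz
    | smul v y _ hy => rw [mul_smul_comm]; exact Submodule.smul_mem _ v hy
  have hIIR : ∀ (u : A), ∀ b ∈ Submodule.span V gens, b * u ∈ Submodule.span V gens := by
    intro u b hb
    induction hb using Submodule.span_induction with
    | mem b hbg =>
        rw [hco u, Finset.mul_sum]
        refine Submodule.sum_mem _ ?_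
        intro g _
        rw [← mul_assoc]
        exact Submodule.subset_span (hGR2 _ (hGR1 _ hbg _) g)
    | zero => rw [zero_mul]; exact Submodule.zero_mem _
    | add y z _ _ hy hz => rw [add_mul]; exact Submodule.add_mem _ hy hz
    | smul v y _ hy => rw [smul_mul_assoc]; exact Submodule.smul_mem _ v hy
  -- the distinguished element
  have haII : ι s₀ * x σ₀ ∈ gens := by
    rw [hgens]
    refine ⟨1, 1, 1, 1, ?_⟩
    simp [hx1]
  have hanotm : ι s₀ * x σ₀ ∉ (IsLocalRing.maximalIdeal V) • (⊤ : Submodule V A) := by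
    intro hmem
    have hMall : ∀ b ∈ (IsLocalRing.maximalIdeal V) • (⊤ : Submodule V A),
        ∀ g : K ≃ₐ[F] K, co b g ∈ M := by
      intro b hb
      refine Submodule.smul_induction_on hb ?_ ?_
      · intro r hr n _ g
        rw [congrFun (hcoSmul r n) g]
        exact M.mul_mem_right _ (hmM r hr)
      · intro b₁ b₂ h₁ h₂ g
        rw [congrFun (hcoAdd b₁ b₂) g]
        exact M.add_mem (h₁ g) (h₂ g)
    have hc := hMall _ hmem σ₀
    rw [congrFun (hcoSingle s₀ σ₀) σ₀] at hc
    simp only [if_pos rfl] at hc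
    exact hs₀M hc
  -- Azumaya forces the two-sided ideal to be everything
  have hIItop : Submodule.span V gens = ⊤ := by
    refine azumaya_ideal_eq_top' hAz _ ?_ (ι s₀ * x σ₀) (Submodule.subset_span haII) hanotm
    intro u w i hi
    exact hIIR w _ (hIIL u i hi)
  have h1II : (1 : A) ∈ Submodule.span V gens := by
    rw [hIItop]; exact Submodule.mem_top
  -- normal form of generators
  have hgen_eq : ∀ (s t : integralClosure V K) (τ ρ : K ≃ₐ[F] K),
      ι s * x τ * ι s₀ * x σ₀ * ι t * x ρ
        = ι (s * ehom hstabS τ s₀ * fS f hfS τ σ₀ * ehom hstabS (τ * σ₀) t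
            * fS f hfS (τ * σ₀) ρ) * x (τ * σ₀ * ρ) := by
    intro s t τ ρ
    simp only [mul_assoc]
    rw [hxs2, hxx2, hxs2, hxx1, hii2, hii2, hii2, hii2]
    simp only [mul_assoc]
  -- extraction of the coefficient at 1
  set J : Ideal (integralClosure V K) :=
    Ideal.span {y | ∃ τ : K ≃ₐ[F] K,
      y = ehom hstabS τ s₀ * fS f hfS τ σ₀ * fS f hfS (τ * σ₀) (τ * σ₀)⁻¹} with hJ
  have hcoJ : ∀ b ∈ Submodule.span V gens, co b 1 ∈ J := by
    intro b hb
    induction hb using Submodule.span_induction with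
    | mem b hbg =>
        rw [hgens] at hbg
        obtain ⟨s, t, τ, ρ, rfl⟩ := hbg
        rw [hgen_eq, congrFun (hcoSingle _ _) 1]
        by_cases h1 : (1 : K ≃ₐ[F] K) = τ * σ₀ * ρ
        · simp only [if_pos h1]
          have hρ : ρ = (τ * σ₀)⁻¹ := eq_inv_of_mul_eq_one_right h1.symm
          subst hρ
          have hgen : ehom hstabS τ s₀ * fS f hfS τ σ₀ * fS f hfS (τ * σ₀) (τ * σ₀)⁻¹ ∈ J := by
            rw [hJ]
            exact Ideal.subset_span ⟨τ, rfl⟩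
          have heq : s * ehom hstabS τ s₀ * fS f hfS τ σ₀ * ehom hstabS (τ * σ₀) t
              * fS f hfS (τ * σ₀) (τ * σ₀)⁻¹
              = (s * ehom hstabS (τ * σ₀) t)
                * (ehom hstabS τ s₀ * fS f hfS τ σ₀ * fS f hfS (τ * σ₀) (τ * σ₀)⁻¹) := by
            ring
          rw [heq]
          exact J.mul_mem_left _ hgen
        · simp only [if_neg h1]
          exact J.zero_mem
    | zero => rw [congrFun hcoZero 1]; exact J.zero_mem
    | add y z _ _ hy hz => rw [congrFun (hcoAdd y z) 1]; exact J.add_mem hy hz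
    | smul v y _ hy =>
        rw [congrFun (hcoSmul v y) 1]
        exact J.mul_mem_left _ hy
  have h1J : (1 : integralClosure V K) ∈ J := by
    have hc := hcoJ 1 h1II
    rw [congrFun hcoOne 1] at hc
    simpa using hc
  -- hence some generator of J avoids M
  have hgenM : ∃ τ : K ≃ₐ[F] K,
      ehom hstabS τ s₀ * fS f hfS τ σ₀ * fS f hfS (τ * σ₀) (τ * σ₀)⁻¹ ∉ M := by
    by_contra hall
    push_neg at hall
    have hJM : J ≤ M := by
      rw [hJ, Ideal.span_le]
      rintro y ⟨τ, rfl⟩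
      exact hall τ
    exact hMmax.ne_top (Ideal.eq_top_iff_one M |>.mpr (hJM h1J))
  obtain ⟨d, hd⟩ := hgenM
  -- split into factors
  have h1 : ehom hstabS d s₀ ∉ M := fun h => hd (M.mul_mem_right _ (M.mul_mem_right _ h))
  have h2 : fS f hfS d σ₀ ∉ M := fun h => hd (M.mul_mem_right _ (M.mul_mem_left _ h))
  have h3 : fS f hfS (d * σ₀) (d * σ₀)⁻¹ ∉ M := fun h => hd (M.mul_mem_left _ h)
  have h3' : fS f hfS (d * σ₀) (σ₀⁻¹ * d⁻¹) ∉ M := by rwa [← mul_inv_rev]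
  -- d stabilizes M
  have hDM := hs₀D d h1
  have hDiff : ∀ y : integralClosure V K, ehom hstabS d y ∈ M ↔ y ∈ M := by
    intro y
    conv_rhs => rw [← hDM]
    exact Iff.rfl
  have hDinv : ∀ y : integralClosure V K, ehom hstabS d⁻¹ y ∈ M ↔ y ∈ M := by
    intro y
    rw [← hDiff (ehom hstabS d⁻¹ y), ehom_ehom, mul_inv_cancel, ehom_one]
  -- cocycle computations
  have hiv : fS f hfS d d⁻¹ ∉ M := by
    have hc := hcoc' d σ₀ (σ₀⁻¹ * d⁻¹)
    rw [mul_inv_cancel_left] at hc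
    intro hmem
    have hmem2 : ehom hstabS d (fS f hfS σ₀ (σ₀⁻¹ * d⁻¹)) * fS f hfS d d⁻¹ ∈ M :=
      M.mul_mem_left _ hmem
    rw [hc] at hmem2
    exact hmulnm _ _ h2 h3' hmem2
  have hiv' : fS f hfS d⁻¹ d ∉ M := by
    have hc := hcoc' d d⁻¹ d
    rw [inv_mul_cancel, mul_inv_cancel, hnorm2, hnorm1, mul_one, mul_one] at hc
    rw [← hDiff, hc]
    exact hiv
  have hvi : fS f hfS σ₀ (σ₀⁻¹ * d⁻¹) ∉ M := by
    have hc := hcoc' d⁻¹ (d * σ₀) (σ₀⁻¹ * d⁻¹)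
    have hone : (d * σ₀) * (σ₀⁻¹ * d⁻¹) = 1 := by group
    rw [hone, hnorm2, mul_one, inv_mul_cancel_left] at hc
    have hL : ehom hstabS d⁻¹ (fS f hfS (d * σ₀) (σ₀⁻¹ * d⁻¹)) ∉ M :=
      fun h => h3' ((hDinv _).mp h)
    rw [hc] at hL
    exact fun h => hL (M.mul_mem_left _ h)
  have hfinal := hcoc' σ₀ (σ₀⁻¹ * d⁻¹) d
  rw [inv_mul_cancel_right, mul_inv_cancel_left] at hfinal
  have hmem2 : ehom hstabS σ₀ (fS f hfS (σ₀⁻¹ * d⁻¹) d) * fS f hfS σ₀ σ₀⁻¹ ∈ M :=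
    M.mul_mem_left _ hF₀M
  rw [hfinal] at hmem2
  exact hmulnm _ _ hvi hiv' hmem2
end
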